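/- (Key lemma for D3: coordinatewise monotonicity of the entropic-weight functional.) Let I be a nonempty finite index set and define, for a vector x = (x_i)_{i∈I} of nonnegative reals, f(x) = −Σ_{i∈I} x_i·log₂ x_i + (Σ_{i∈I} x_i)·log₂(Σ_{i∈I} x_i), with the convention 0·log₂ 0 = 0. If y = (y_i)_{i∈I} and x = (x_i)_{i∈I} satisfy 0 ≤ y_i ≤ x_i for all i ∈ I, then f(y) ≤ f(x). -/
import Mathlib

open Real Finset

/-- Monotone differences for the convex function `φ u = u * log u` on `[0, ∞)`:
`φ b - φ a ≤ φ (b+c) - φ (a+c)`. -/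
lemma mulLog_diff_mono {a b c : ℝ} (ha : 0 ≤ a) (hab : a ≤ b) (hc : 0 ≤ c) :
    -(a * Real.log a) + (a + c) * Real.log (a + c) ≤
      -(b * Real.log b) + (b + c) * Real.log (b + c) := by
  rcases eq_or_lt_of_le hab with rfl | hab
  · exact le_refl _
  rcases eq_or_lt_of_le hc with rfl | hc
  · simp
  set φ : ℝ → ℝ := fun u => u * Real.log u with hφ
  have hconv : ConvexOn ℝ (Set.Ici (0 : ℝ)) φ := Real.strictConvexOn_mul_log.convexOn
  have hb : (0:ℝ) ≤ b := ha.trans hab.le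
  have h1 : (φ b - φ a) / (b - a) ≤ (φ (b + c) - φ a) / (b + c - a) := by
    apply hconv.secant_mono (Set.mem_Ici.2 ha) (Set.mem_Ici.2 hb)
      (Set.mem_Ici.2 (by linarith)) (by linarith) (by linarith) (by linarith)
  have h2 : (φ (b + c) - φ a) / (b + c - a) ≤ (φ (b + c) - φ (a + c)) / (b + c - (a + c)) := by
    have := hconv.secant_mono (a := b + c) (x := a) (y := a + c)
      (Set.mem_Ici.2 (by linarith)) (Set.mem_Ici.2 ha) (Set.mem_Ici.2 (by linarith))
      (by linarith) (by linarith) (by linarith)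
    calc (φ (b + c) - φ a) / (b + c - a)
        = (φ a - φ (b + c)) / (a - (b + c)) := by rw [← neg_div_neg_eq]; ring_nf
      _ ≤ (φ (a + c) - φ (b + c)) / (a + c - (b + c)) := this
      _ = (φ (b + c) - φ (a + c)) / (b + c - (a + c)) := by rw [← neg_div_neg_eq]; ring_nf
  have h3 : (φ b - φ a) / (b - a) ≤ (φ (b + c) - φ (a + c)) / (b - a) := by
    have : b + c - (a + c) = b - a := by ring
    rw [this] at h2; exact h1.trans h2
  have h4 : φ b - φ a ≤ φ (b + c) - φ (a + c) := by
    have hba : (0:ℝ) < b - a := by linarith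
    have := (div_le_div_iff_of_pos_right hba).mp h3
    linarith
  simp only [hφ] at h4
  linarith

/-- The same for `logb 2`. -/
lemma mulLogb_diff_mono {a b c : ℝ} (ha : 0 ≤ a) (hab : a ≤ b) (hc : 0 ≤ c) :
    -(a * Real.logb 2 a) + (a + c) * Real.logb 2 (a + c) ≤
      -(b * Real.logb 2 b) + (b + c) * Real.logb 2 (b + c) := by
  have h := mulLog_diff_mono ha hab hc
  have h2 : (0:ℝ) < Real.log 2 := Real.log_pos (by norm_num)
  simp only [Real.logb]
  calc -(a * (Real.log a / Real.log 2)) + (a + c) * (Real.log (a + c) / Real.log 2)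
        = (-(a * Real.log a) + (a + c) * Real.log (a + c)) / Real.log 2 := by ring
      _ ≤ (-(b * Real.log b) + (b + c) * Real.log (b + c)) / Real.log 2 := by
          exact div_le_div_of_nonneg_right h h2.le |>.trans_eq rfl
      _ = -(b * (Real.log b / Real.log 2)) + (b + c) * (Real.log (b + c) / Real.log 2) := by ring

/-- One-coordinate step: increasing one coordinate increases the functional. -/
lemma step_lemma {ι : Type*} [Fintype ι] [DecidableEq ι] (g : ι → ℝ) (j : ι) (b : ℝ)
    (hg : ∀ i, 0 ≤ g i) (hb : g j ≤ b) :
    -∑ i, g i * Real.logb 2 (g i) + (∑ i, g i) * Real.logb 2 (∑ i, g i) ≤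
      -∑ i, Function.update g j b i * Real.logb 2 (Function.update g j b i) +
        (∑ i, Function.update g j b i) * Real.logb 2 (∑ i, Function.update g j b i) := by
  classical
  set c : ℝ := ∑ i ∈ univ.erase j, g i with hc
  have hc0 : 0 ≤ c := Finset.sum_nonneg fun i _ => hg i
  have hsum : ∑ i, g i = g j + c := by
    rw [hc, Finset.add_sum_erase _ _ (mem_univ j)]
  have hupd_erase : ∀ i ∈ univ.erase j, Function.update g j b i = g i := by
    intro i hi
    exact Function.update_of_ne (Finset.ne_of_mem_erase hi) _ _
  have hsum' : ∑ i, Function.update g j b i = b + c := by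
    rw [← Finset.add_sum_erase _ _ (mem_univ j), Function.update_self, hc,
      Finset.sum_congr rfl hupd_erase]
  have hent : ∑ i, g i * Real.logb 2 (g i) =
      g j * Real.logb 2 (g j) + ∑ i ∈ univ.erase j, g i * Real.logb 2 (g i) :=
    (Finset.add_sum_erase univ (fun i => g i * Real.logb 2 (g i)) (mem_univ j)).symm
  have hent' : ∑ i, Function.update g j b i * Real.logb 2 (Function.update g j b i) =
      b * Real.logb 2 b + ∑ i ∈ univ.erase j, g i * Real.logb 2 (g i) := by
    rw [← Finset.add_sum_erase _ (fun i => Function.update g j b i * Real.logb 2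
      (Function.update g j b i)) (mem_univ j), Function.update_self]
    congr 1
    exact Finset.sum_congr rfl fun i hi => by rw [hupd_erase i hi]
  rw [hsum, hsum', hent, hent']
  have := mulLogb_diff_mono (hg j) hb hc0
  linarith

/-- Key lemma for (D3): the functional
`f(x) = −Σ_i x_i·log₂ x_i + (Σ_i x_i)·log₂(Σ_i x_i)` on finite families of
nonnegative reals is coordinatewise monotone: if `0 ≤ y_i ≤ x_i` for all `i`,
then `f(y) ≤ f(x)`.  (In Lean `Real.logb 2 0 = 0`, so `0·log₂ 0 = 0` holds.) -/
theorem stmt8 {ι : Type*} [Fintype ι] [Nonempty ι] (x y : ι → ℝ)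
    (hy0 : ∀ i, 0 ≤ y i) (hyx : ∀ i, y i ≤ x i) :
    -∑ i, y i * Real.logb 2 (y i) + (∑ i, y i) * Real.logb 2 (∑ i, y i) ≤
      -∑ i, x i * Real.logb 2 (x i) + (∑ i, x i) * Real.logb 2 (∑ i, x i) := by
  classical
  set F : (ι → ℝ) → ℝ := fun g =>
    -∑ i, g i * Real.logb 2 (g i) + (∑ i, g i) * Real.logb 2 (∑ i, g i) with hF
  suffices h : ∀ s : Finset ι, F y ≤ F (fun i => if i ∈ s then x i else y i) by
    have := h univ
    simpa [hF] using this
  intro s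
  induction s using Finset.induction_on with
  | empty => simp
  | @insert j s hj ih =>
    have hz : (fun i => if i ∈ insert j s then x i else y i) =
        Function.update (fun i => if i ∈ s then x i else y i) j (x j) := by
      funext i
      rcases eq_or_ne i j with rfl | hij
      · simp
      · simp [Function.update_of_ne hij, Finset.mem_insert, hij]
    rw [hz]
    refine ih.trans ?_
    exact step_lemma _ j (x j) (fun i => by by_cases h : i ∈ s <;> simp [h, hy0 i, (hy0 i).trans (hyx i)])
      (by simp [hj, hyx j])
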